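/- Let Θ be the Klein four-group with nontrivial elements a, b, c. The sequence of Z[Θ]-modules 0 → Z → Z[Θ/⟨a⟩] ⊕ Z[Θ/⟨b⟩] → Z[Θ] ⊕ Z → Z[Θ/⟨c⟩] → 0 is exact, where the first map sends 1 to the pair of norm elements, the middle map embeds each Z[Θ/⟨θ⟩] into Z[Θ] by x̄ ↦ Σ_{g ↦ x̄} g with appropriate sign and sends to the Z-coordinate via augmentation, and the last map is given by the projection Z[Θ] → Z[Θ/⟨c⟩] minus the norm element times the integer coordinate. -/

import Mathlib

/-! The Klein four-group `Θ = ℤ/2 × ℤ/2`, `a = (1,0)`, `b = (0,1)`, `c = (1,1)`.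
`ℤ[Θ]` is modelled as functions `Θ → ℤ`; `ℤ[Θ/⟨θ⟩]` as functions `ZMod 2 → ℤ`,
via the coordinate invariant under `θ` (second coordinate for `a`, first for `b`,
sum for `c`). -/

lemma zmod2_cases (j : ZMod 2) : j = 0 ∨ j = 1 := by revert j; decide

/-- Exactness of `0 → ℤ → ℤ[Θ/⟨a⟩] ⊕ ℤ[Θ/⟨b⟩] → ℤ[Θ] ⊕ ℤ → ℤ[Θ/⟨c⟩] → 0`:
the first map sends `1` to the pair of norm elements, the middle map is
`(x̄,ȳ) ↦ (i_a(x̄) - i_b(ȳ), ε(x̄) - ε(ȳ))`, and the last map is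
`(z,n) ↦ pr_c(z) - n·N_c`. -/
theorem stmt_5
    (d₀ : ℤ → (ZMod 2 → ℤ) × (ZMod 2 → ℤ))
    (hd₀ : ∀ n : ℤ, d₀ n = (fun _ => n, fun _ => n))
    (d₁ : (ZMod 2 → ℤ) × (ZMod 2 → ℤ) → (ZMod 2 × ZMod 2 → ℤ) × ℤ)
    (hd₁ : ∀ x : (ZMod 2 → ℤ) × (ZMod 2 → ℤ), d₁ x =
      (fun p => x.1 p.2 - x.2 p.1, (x.1 0 + x.1 1) - (x.2 0 + x.2 1)))
    (d₂ : (ZMod 2 × ZMod 2 → ℤ) × ℤ → (ZMod 2 → ℤ))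
    (hd₂ : ∀ z : (ZMod 2 × ZMod 2 → ℤ) × ℤ, d₂ z =
      fun j => z.1 (0, j) + z.1 (1, j + 1) - z.2) :
    Function.Injective d₀ ∧ Function.Exact d₀ d₁ ∧ Function.Exact d₁ d₂ ∧
      Function.Surjective d₂ := by
  have two0 : (2 : ZMod 2) = 0 := by decide
  have one0 : (1 : ZMod 2) ≠ 0 := by decide
  refine ⟨?_, ?_, ?_, ?_⟩
  · intro m n h
    have := congrArg (fun p => p.1 (0 : ZMod 2)) ((hd₀ m).symm.trans (h.trans (hd₀ n)))
    simpa using this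
  · intro x
    rw [hd₁]
    constructor
    · intro h
      have h1 : ∀ p : ZMod 2 × ZMod 2, x.1 p.2 - x.2 p.1 = 0 := fun p =>
        congrFun (congrArg Prod.fst h) p
      refine ⟨x.1 0, ?_⟩
      rw [hd₀]
      have e00 : x.1 0 - x.2 0 = 0 := h1 (0, 0)
      have e10 : x.1 0 - x.2 1 = 0 := h1 (1, 0)
      have e01 : x.1 1 - x.2 0 = 0 := h1 (0, 1)
      refine Prod.ext ?_ ?_ <;> ext j <;> rcases zmod2_cases j with hj | hj <;> subst hj <;>
        simp <;> omega
    · rintro ⟨n, rfl⟩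
      rw [hd₀]
      refine Prod.ext ?_ ?_
      · ext p; simp
      · simp
  · intro z
    rw [hd₂]
    constructor
    · intro h
      have h0 : z.1 (0, 0) + z.1 (1, 1) - z.2 = 0 := congrFun h 0
      have h1 : z.1 (0, 1) + z.1 (1, 1 + 1) - z.2 = 0 := congrFun h 1
      rw [show ((1 : ZMod 2) + 1) = 0 from by decide] at h1
      simp only [Prod.mk_zero_zero, Prod.mk_one_one] at h0 h1
      refine ⟨((fun j => z.1 (0, j)), fun i => if i = 0 then 0 else z.1 (0,0) - z.1 (1,0)), ?_⟩
      rw [hd₁]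
      have hz : z = (z.1, z.2) := rfl
      rw [hz]
      refine Prod.ext ?_ ?_
      · ext p
        rcases zmod2_cases p.1 with hi | hi <;> rcases zmod2_cases p.2 with hj | hj <;>
          rw [show p = (p.1, p.2) from rfl, hi, hj] <;> simp [one0, Prod.mk_zero_zero, Prod.mk_one_one] at h0 h1 ⊢ <;> omega
      · simp [one0]
        omega
    · rintro ⟨x, rfl⟩
      rw [hd₁]
      ext j
      rcases zmod2_cases j with hj | hj <;> subst hj <;>
        simp [show ((1 : ZMod 2) + 1) = 0 from by decide, show ((0 : ZMod 2) + 1) = 1 from by decide] <;>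
        ring
  · intro w
    refine ⟨((fun p => if p.1 = 0 then w p.2 else 0), 0), ?_⟩
    rw [hd₂]
    ext j
    simp [one0]
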